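/- arXiv:2306.10368 — 2 statements merged into one kernel-verified Lean document; each statement's English description precedes it below -/
import Mathlib

section
/- Suppose P_1,…,P_{m+Δ} are nonnegative reals with Σ_i P_i ≥ OPT, and P'_1,…,P'_{m+Δ} are nonnegative reals with P'_i ≥ P_i/2 for all i. Then the sum of the m largest P'_i is at least (m/(2(m+Δ)))·OPT; in particular if Δ ≤ m this is at least OPT/4. -/
/-- The 1/4-approximation guarantee: if pre-correction profits sum to at least `OPT` and
correction loses at most half per drone, the `m` most profitable corrected drones yield
at least `(m/(2(m+Δ)))·OPT`, hence at least `OPT/4` when `Δ ≤ m`. -/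
theorem stmt_5 (m Δ : ℕ) (hm : 0 < m) (hΔ : 0 < Δ) (OPT : ℝ) (hOPT : 0 ≤ OPT)
    (P P' : Fin (m + Δ) → ℝ) (hP : ∀ i, 0 ≤ P i) (hP' : ∀ i, 0 ≤ P' i)
    (hsum : ∑ i, P i ≥ OPT) (hhalf : ∀ i, P' i ≥ P i / 2)
    (SA : Finset (Fin (m + Δ))) (hcard : SA.card = m)
    (hlargest : ∀ i ∈ SA, ∀ j ∉ SA, P' j ≤ P' i) :
    (∑ i ∈ SA, P' i ≥ ((m : ℝ) / (2 * (m + Δ))) * OPT) ∧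
      (Δ ≤ m → ∑ i ∈ SA, P' i ≥ OPT / 4) := by
  set S := ∑ i ∈ SA, P' i with hS
  have hSnn : 0 ≤ S := Finset.sum_nonneg fun i _ => hP' i
  have hcompcard : SAᶜ.card = Δ := by
    have := Finset.card_compl SA
    rw [hcard, Fintype.card_fin] at this
    omega
  have key : (m : ℝ) * ∑ j ∈ SAᶜ, P' j ≤ (Δ : ℝ) * S := by
    have h1 : ∑ i ∈ SA, ∑ j ∈ SAᶜ, P' j ≤ ∑ i ∈ SA, ∑ j ∈ SAᶜ, P' i :=
      Finset.sum_le_sum fun i hi => Finset.sum_le_sum fun j hj =>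
        hlargest i hi j (Finset.mem_compl.mp hj)
    have h2 : (∑ j ∈ SAᶜ, P' j) * m ≤ (∑ x ∈ SA, P' x) * Δ := by
      simpa [Finset.sum_const, hcard, hcompcard, nsmul_eq_mul, mul_comm, ← Finset.sum_mul] using h1
    rw [hS]; linarith
  have htot : OPT / 2 ≤ ∑ j, P' j := by
    calc OPT / 2 ≤ (∑ i, P i) / 2 := by linarith
    _ = ∑ i, P i / 2 := by rw [Finset.sum_div]
    _ ≤ ∑ i, P' i := Finset.sum_le_sum fun i _ => hhalf i
  have hsplit : ∑ j, P' j = S + ∑ j ∈ SAᶜ, P' j := (Finset.sum_add_sum_compl SA P').symm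
  have hmpos : (0:ℝ) < m := by exact_mod_cast hm
  have hdpos : (0:ℝ) < Δ := by exact_mod_cast hΔ
  have main : S ≥ ((m : ℝ) / (2 * (m + Δ))) * OPT := by
    rw [ge_iff_le, div_mul_eq_mul_div, div_le_iff₀ (by positivity)]
    nlinarith [htot, key, hsplit]
  refine ⟨main, fun hdm => ?_⟩
  have hdm' : (Δ:ℝ) ≤ m := by exact_mod_cast hdm
  have h4 : OPT / 4 ≤ ((m:ℝ) / (2 * (m + Δ))) * OPT := by
    have hq : (1:ℝ)/4 ≤ (m:ℝ) / (2 * (m + Δ)) := by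
      rw [div_le_div_iff₀ (by norm_num) (by positivity)]; nlinarith
    nlinarith [mul_le_mul_of_nonneg_right hq hOPT]
  linarith
end

section
/- Let Q be a subproblem, A an MPFFA for Q, and J the set of jobs in A ending at the common latest endtime t_Q of the drones in the top T_Q of Q. Let A' = A with the jobs in J removed, and Q' the subproblem for which A' is fitting. Then A' is an MPFFA for Q': its profit is at least that of any other fitting family of assignments for Q'. -/
/-- MPFFA lemma for unit-cost MDSP: removing from an MPFFA `A` for subproblem `Q` all
jobs ending at the latest endtime `t_Q` yields a family `A'` that is an MPFFA for the
subproblem `Q'` it fits. Families are indexed assignments of jobs (with endtimes `e`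
and profits `p`) to `m` drones, pairwise disjoint; fitting a subproblem means matching
each drone's latest endtime and (unit-cost) total cost. -/
theorem stmt_13 (n m : ℕ) (e : Fin n → ℕ) (p : Fin n → ℝ) (hp : ∀ j, 0 ≤ p j)
    (t W : Fin m → ℕ) (A : Fin m → Finset (Fin n))
    (hAdisj : ∀ i k, i ≠ k → Disjoint (A i) (A k))
    (hAfit : ∀ i, (A i).sup e = t i ∧ (A i).card = W i)
    (hAmax : ∀ D : Fin m → Finset (Fin n),
      (∀ i k, i ≠ k → Disjoint (D i) (D k)) →
      (∀ i, (D i).sup e = t i ∧ (D i).card = W i) →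
      ∑ i, ∑ j ∈ D i, p j ≤ ∑ i, ∑ j ∈ A i, p j)
    (tQ : ℕ) (htQ : tQ = Finset.univ.sup t)
    (A' : Fin m → Finset (Fin n))
    (hA' : ∀ i, A' i = (A i).filter (fun j => e j ≠ tQ)) :
    ∀ D' : Fin m → Finset (Fin n),
      (∀ i k, i ≠ k → Disjoint (D' i) (D' k)) →
      (∀ i, (D' i).sup e = (A' i).sup e ∧ (D' i).card = (A' i).card) →
      ∑ i, ∑ j ∈ D' i, p j ≤ ∑ i, ∑ j ∈ A' i, p j := by
  intro D' hDdisj hDfit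
  set J : Fin m → Finset (Fin n) := fun i => (A i).filter (fun j => e j = tQ) with hJ
  -- A i splits as A' i ∪ J i, disjointly
  have hsplit : ∀ i, A' i ∪ J i = A i := by
    intro i
    rw [hA' i, hJ]
    simpa using Finset.filter_union_filter_not_eq (fun j => e j ≠ tQ) (A i)
  have hAJdisj : ∀ i, Disjoint (A' i) (J i) := by
    intro i
    rw [hA' i, hJ]
    rw [Finset.disjoint_left]
    intro j hj1 hj2
    exact (Finset.mem_filter.mp hj1).2 (Finset.mem_filter.mp hj2).2
  -- t i ≤ tQ
  have htle : ∀ i, t i ≤ tQ := by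
    intro i; rw [htQ]; exact Finset.le_sup (Finset.mem_univ i)
  -- no job of D' i ends at tQ
  have hDnot : ∀ i, ∀ j ∈ D' i, e j ≠ tQ := by
    intro i j hj hej
    rcases Finset.eq_empty_or_nonempty (A' i) with hAe | hAne
    · have : (D' i).card = 0 := by rw [(hDfit i).2, hAe]; simp
      rw [Finset.card_eq_zero] at this
      simp [this] at hj
    · obtain ⟨k, hk, hke⟩ := Finset.exists_mem_eq_sup (A' i) hAne e
      have hkne : e k ≠ tQ := by
        have := hk; rw [hA' i] at this
        exact (Finset.mem_filter.mp this).2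
      have h1 : tQ ≤ (A' i).sup e := by
        rw [← (hDfit i).1, ← hej]
        exact Finset.le_sup hj
      have h2 : (A' i).sup e ≤ (A i).sup e := by
        apply Finset.sup_mono
        rw [hA' i]; exact Finset.filter_subset _ _
      have h3 : (A i).sup e = t i := (hAfit i).1
      rw [hke] at h1 h2
      have h4 : e k ≤ tQ := h2.trans (h3 ▸ htle i)
      exact hkne (le_antisymm h4 h1)
  -- Define D
  set D : Fin m → Finset (Fin n) := fun i => D' i ∪ J i with hD
  have hDJdisj : ∀ i k, Disjoint (D' i) (J k) := by
    intro i k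
    rw [Finset.disjoint_left]
    intro j hj hjk
    rw [hJ] at hjk
    exact hDnot i j hj (Finset.mem_filter.mp hjk).2
  have hDd : ∀ i k, i ≠ k → Disjoint (D i) (D k) := by
    intro i k hik
    rw [hD]
    simp only [Finset.disjoint_union_left, Finset.disjoint_union_right]
    refine ⟨⟨hDdisj i k hik, (hDJdisj k i).symm⟩, ⟨hDJdisj i k, ?_⟩⟩
    exact (hAdisj i k hik).mono (Finset.filter_subset _ _) (Finset.filter_subset _ _)
  have hDf : ∀ i, (D i).sup e = t i ∧ (D i).card = W i := by
    intro i
    constructor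
    · rw [hD]
      simp only [Finset.sup_union]
      rw [(hDfit i).1, ← (hAfit i).1, ← hsplit i, Finset.sup_union]
    · rw [hD]
      simp only
      rw [Finset.card_union_of_disjoint (hDJdisj i i), (hDfit i).2,
        ← Finset.card_union_of_disjoint (hAJdisj i), hsplit i]
      exact (hAfit i).2
  have hle := hAmax D hDd hDf
  have hsum : ∀ i, ∑ j ∈ D i, p j = ∑ j ∈ D' i, p j + ∑ j ∈ J i, p j := by
    intro i
    rw [hD]
    exact Finset.sum_union (hDJdisj i i)
  have hsumA : ∀ i, ∑ j ∈ A i, p j = ∑ j ∈ A' i, p j + ∑ j ∈ J i, p j := by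
    intro i
    rw [← hsplit i]
    exact Finset.sum_union (hAJdisj i)
  simp only [hsum, hsumA, Finset.sum_add_distrib] at hle
  linarith
end
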